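/- arXiv:1707.06900 — 2 statements merged into one kernel-verified Lean document; each statement's English description precedes it below -/
import Mathlib

section
/- Let M(α) be the N×N matrix with entries [M(α)]_{ij} = P_{ij}^α · e^{-α(1-α)β_i²/2}, where P is an irreducible aperiodic stochastic matrix with strictly positive entries and β ∈ ℝ^N. Then the function α ↦ log λ(α), where λ(α) is the spectral radius (Perron eigenvalue) of M(α), is convex on ℝ. -/
open Filter Real

/-- log-convexity predicate -/
def LC12 (f : ℝ → ℝ) : Prop :=
  (∀ x, 0 < f x) ∧ ∀ x y a b : ℝ, 0 ≤ a → 0 ≤ b → a + b = 1 →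
    f (a * x + b * y) ≤ f x ^ a * f y ^ b

lemma LC12.mul {f g : ℝ → ℝ} (hf : LC12 f) (hg : LC12 g) : LC12 (fun x => f x * g x) := by
  refine ⟨fun x => mul_pos (hf.1 x) (hg.1 x), fun x y a b ha hb hab => ?_⟩
  calc f (a*x+b*y) * g (a*x+b*y) ≤ (f x ^ a * f y ^ b) * (g x ^ a * g y ^ b) :=
        mul_le_mul (hf.2 x y a b ha hb hab) (hg.2 x y a b ha hb hab)
          (le_of_lt (hg.1 _)) (mul_nonneg (Real.rpow_nonneg (hf.1 x).le a) (Real.rpow_nonneg (hf.1 y).le b))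
    _ = (f x * g x) ^ a * (f y * g y) ^ b := by
        rw [Real.mul_rpow (hf.1 x).le (hg.1 x).le, Real.mul_rpow (hf.1 y).le (hg.1 y).le]; ring

lemma LC12.add {f g : ℝ → ℝ} (hf : LC12 f) (hg : LC12 g) : LC12 (fun x => f x + g x) := by
  refine ⟨fun x => add_pos (hf.1 x) (hg.1 x), fun x y a b ha hb hab => ?_⟩
  have h1 := hf.2 x y a b ha hb hab
  have h2 := hg.2 x y a b ha hb hab
  set u := f x; set v := f y; set s := g x; set t := g y
  have hu : 0 < u := hf.1 x
  have hv : 0 < v := hf.1 y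
  have hs : 0 < s := hg.1 x
  have ht : 0 < t := hg.1 y
  have hU : 0 < u + s := by positivity
  have hV : 0 < v + t := by positivity
  have key : u ^ a * v ^ b + s ^ a * t ^ b ≤ (u+s) ^ a * (v+t) ^ b := by
    have g1 : (u/(u+s)) ^ a * (v/(v+t)) ^ b ≤ a * (u/(u+s)) + b * (v/(v+t)) :=
      Real.geom_mean_le_arith_mean2_weighted ha hb (by positivity) (by positivity) hab
    have g2 : (s/(u+s)) ^ a * (t/(v+t)) ^ b ≤ a * (s/(u+s)) + b * (t/(v+t)) :=
      Real.geom_mean_le_arith_mean2_weighted ha hb (by positivity) (by positivity) hab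
    have e1 : (u/(u+s)) ^ a * (v/(v+t)) ^ b = (u ^ a * v ^ b) / ((u+s) ^ a * (v+t) ^ b) := by
      rw [Real.div_rpow hu.le hU.le, Real.div_rpow hv.le hV.le]; ring
    have e2 : (s/(u+s)) ^ a * (t/(v+t)) ^ b = (s ^ a * t ^ b) / ((u+s) ^ a * (v+t) ^ b) := by
      rw [Real.div_rpow hs.le hU.le, Real.div_rpow ht.le hV.le]; ring
    have hD : (0:ℝ) < (u+s) ^ a * (v+t) ^ b := by positivity
    rw [e1] at g1
    rw [e2] at g2
    have hsum : (u ^ a * v ^ b) / ((u+s) ^ a * (v+t) ^ b)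
        + (s ^ a * t ^ b) / ((u+s) ^ a * (v+t) ^ b) ≤ 1 := by
      calc _ ≤ (a * (u/(u+s)) + b * (v/(v+t))) + (a * (s/(u+s)) + b * (t/(v+t))) :=
            add_le_add g1 g2
        _ = a * ((u+s)/(u+s)) + b * ((v+t)/(v+t)) := by ring
        _ = 1 := by rw [div_self hU.ne', div_self hV.ne', mul_one, mul_one, hab]
    calc u ^ a * v ^ b + s ^ a * t ^ b
        = ((u ^ a * v ^ b) / ((u+s) ^ a * (v+t) ^ b)
          + (s ^ a * t ^ b) / ((u+s) ^ a * (v+t) ^ b)) * ((u+s) ^ a * (v+t) ^ b) := by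
          field_simp
      _ ≤ 1 * ((u+s) ^ a * (v+t) ^ b) := by
          exact mul_le_mul_of_nonneg_right hsum hD.le
      _ = _ := one_mul _
  calc f (a*x+b*y) + g (a*x+b*y) ≤ u ^ a * v ^ b + s ^ a * t ^ b := add_le_add h1 h2
    _ ≤ _ := key

lemma LC12.sum {ι : Type*} {s : Finset ι} (hs : s.Nonempty) {f : ι → ℝ → ℝ}
    (h : ∀ i ∈ s, LC12 (f i)) : LC12 (fun x => ∑ i ∈ s, f i x) := by
  induction hs using Finset.Nonempty.cons_induction with
  | singleton i => simpa using h i (Finset.mem_singleton_self i)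
  | cons i s his hs ih =>
      simp only [Finset.sum_cons]
      exact (h i (Finset.mem_cons_self i s)).add
        (ih fun j hj => h j (Finset.mem_cons_of_mem hj))

/-- exp of a function d*x^2 + e*x with d ≥ 0 is LC -/
lemma LC12.expQuad (d e : ℝ) (hd : 0 ≤ d) : LC12 (fun x => Real.exp (d * x^2 + e * x)) := by
  refine ⟨fun x => Real.exp_pos _, fun x y a b ha hb hab => ?_⟩
  have h1 : ∀ t c : ℝ, (Real.exp t) ^ c = Real.exp (c * t) := by
    intro t c
    rw [← Real.exp_mul]; ring_nf
  rw [h1, h1, ← Real.exp_add, Real.exp_le_exp]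
  have hb' : b = 1 - a := by linarith
  subst hb'
  nlinarith [sq_nonneg (x - y), mul_nonneg (mul_nonneg ha hb) (sq_nonneg (x - y)),
    mul_nonneg hd (mul_nonneg (mul_nonneg ha hb) (sq_nonneg (x - y)))]

open scoped NNReal ENNReal
attribute [local instance] Matrix.linftyOpNormedAddCommGroup Matrix.linftyOpNormedRing
  Matrix.linftyOpNormedAlgebra

noncomputable instance matCompl {m n : Type*} [Fintype m] [Fintype n] :
    CompleteSpace (Matrix m n ℂ) :=
  letI : NormedSpace ℂ (Matrix m n ℂ) := Matrix.linftyOpNormedSpace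
  FiniteDimensional.complete ℂ (Matrix m n ℂ)

lemma LC12.convexOn_log {f : ℝ → ℝ} (hf : LC12 f) :
    ConvexOn ℝ Set.univ (fun x => Real.log (f x)) := by
  refine ⟨convex_univ, fun x _ y _ a b ha hb hab => ?_⟩
  simp only [smul_eq_mul]
  calc Real.log (f (a*x+b*y)) ≤ Real.log (f x ^ a * f y ^ b) :=
        Real.log_le_log (hf.1 _) (hf.2 x y a b ha hb hab)
    _ = a * Real.log (f x) + b * Real.log (f y) := by
        rw [Real.log_mul (Real.rpow_pos_of_pos (hf.1 x) a).ne' (Real.rpow_pos_of_pos (hf.1 y) b).ne',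
          Real.log_rpow (hf.1 x), Real.log_rpow (hf.1 y)]

lemma convexOn_of_tendsto12 {f : ℕ → ℝ → ℝ} {g : ℝ → ℝ}
    (hc : ∀ n, ConvexOn ℝ Set.univ (f n))
    (hl : ∀ x, Filter.Tendsto (fun n => f n x) Filter.atTop (nhds (g x))) :
    ConvexOn ℝ Set.univ g := by
  refine ⟨convex_univ, fun x _ y _ a b ha hb hab => ?_⟩
  simp only [smul_eq_mul]
  refine le_of_tendsto_of_tendsto' (hl _) (((hl x).const_mul a).add ((hl y).const_mul b))
    (fun n => ?_)
  simpa [smul_eq_mul] using (hc n).2 (Set.mem_univ x) (Set.mem_univ y) ha hb hab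

lemma norm_bounds12 {N : ℕ} (hN : 0 < N) (B : Matrix (Fin N) (Fin N) ℝ)
    (hB : ∀ i j, 0 < B i j) :
    B ⟨0, hN⟩ ⟨0, hN⟩ ≤ ‖B.map Complex.ofReal‖ ∧
    ‖B.map Complex.ofReal‖ ≤ (∑ i, ∑ j, B i j) ∧
    (∑ i, ∑ j, B i j) ≤ N * ‖B.map Complex.ofReal‖ := by
  have hnn : ‖B.map Complex.ofReal‖₊ = Finset.univ.sup fun i => ∑ j, ‖B i j‖₊ := by
    rw [Matrix.linfty_opNNNorm_def]
    congr 1; funext i; congr 1; funext j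
    simp [Matrix.map_apply, Complex.nnnorm_real]
  have hrowc : ∀ i : Fin N, ((∑ j, ‖B i j‖₊ : ℝ≥0) : ℝ) = ∑ j, B i j := by
    intro i
    push_cast
    exact Finset.sum_congr rfl fun j _ => Real.norm_of_nonneg (hB i j).le
  have hnorm : ‖B.map Complex.ofReal‖ = ((Finset.univ.sup fun i => ∑ j, ‖B i j‖₊ : ℝ≥0) : ℝ) := by
    rw [← hnn]; rfl
  refine ⟨?_, ?_, ?_⟩
  · rw [hnorm]
    calc B ⟨0, hN⟩ ⟨0, hN⟩ ≤ ∑ j, B ⟨0, hN⟩ j :=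
          Finset.single_le_sum (fun j _ => (hB _ j).le) (Finset.mem_univ _)
      _ = ((∑ j, ‖B ⟨0, hN⟩ j‖₊ : ℝ≥0) : ℝ) := (hrowc _).symm
      _ ≤ _ := by
          exact_mod_cast NNReal.coe_le_coe.mpr
            (Finset.le_sup (f := fun i => ∑ j, ‖B i j‖₊) (Finset.mem_univ ⟨0, hN⟩))
  · rw [hnorm]
    have : (Finset.univ.sup fun i => ∑ j, ‖B i j‖₊) ≤ ∑ i, ∑ j, ‖B i j‖₊ :=
      Finset.sup_le fun i _ => Finset.single_le_sum
        (f := fun i => ∑ j, ‖B i j‖₊) (fun i _ => by positivity) (Finset.mem_univ i)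
    calc ((Finset.univ.sup fun i => ∑ j, ‖B i j‖₊ : ℝ≥0) : ℝ)
        ≤ ((∑ i, ∑ j, ‖B i j‖₊ : ℝ≥0) : ℝ) := NNReal.coe_le_coe.mpr this
      _ = ∑ i, ∑ j, B i j := by
          rw [NNReal.coe_sum]
          exact Finset.sum_congr rfl fun i _ => hrowc i
  · rw [hnorm]
    calc (∑ i, ∑ j, B i j) = ∑ i : Fin N, ((∑ j, ‖B i j‖₊ : ℝ≥0) : ℝ) :=
          Finset.sum_congr rfl fun i _ => (hrowc i).symm
      _ ≤ ∑ _i : Fin N, ((Finset.univ.sup fun i => ∑ j, ‖B i j‖₊ : ℝ≥0) : ℝ) :=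
          Finset.sum_le_sum fun i _ =>
            NNReal.coe_le_coe.mpr
              (Finset.le_sup (f := fun i => ∑ j, ‖B i j‖₊) (Finset.mem_univ i))
      _ = N * _ := by rw [Finset.sum_const, Finset.card_univ, Fintype.card_fin, nsmul_eq_mul]

lemma map_pow12 {N : ℕ} (B : Matrix (Fin N) (Fin N) ℝ) (n : ℕ) :
    (B.map Complex.ofReal) ^ n = (B ^ n).map Complex.ofReal := by
  have h : ∀ C : Matrix (Fin N) (Fin N) ℝ, C.map Complex.ofReal =
      (Complex.ofRealHom.mapMatrix : Matrix (Fin N) (Fin N) ℝ →+* _) C := fun C => rfl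
  rw [h, h, ← map_pow]

theorem stmt12 {N : ℕ} (P : Matrix (Fin N) (Fin N) ℝ) (β : Fin N → ℝ)
    (hP : ∀ i j, 0 < P i j) (hrow : ∀ i, ∑ j, P i j = 1) :
    ConvexOn ℝ Set.univ (fun α : ℝ =>
      Real.log ((spectralRadius ℂ
        ((Matrix.of fun i j =>
            Real.rpow (P i j) α * Real.exp (-α * (1 - α) * β i ^ 2 / 2)).map
          Complex.ofReal)).toReal)) := by
  rcases Nat.eq_zero_or_pos N with h0 | hN
  · subst h0
    have hsp : ∀ A : Matrix (Fin 0) (Fin 0) ℂ, spectrum ℂ A = ∅ := by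
      intro A
      ext k
      simp [spectrum.mem_iff, isUnit_of_subsingleton]
    simpa [spectralRadius, hsp] using convexOn_const (Real.log 0) convex_univ
  haveI : Nonempty (Fin N) := ⟨⟨0, hN⟩⟩
  set i0 : Fin N := ⟨0, hN⟩ with hi0
  set Mr : ℝ → Matrix (Fin N) (Fin N) ℝ := fun α => Matrix.of fun i j =>
    Real.rpow (P i j) α * Real.exp (-α * (1 - α) * β i ^ 2 / 2) with hMr
  have base : ∀ i j, LC12 (fun α => Mr α i j) := by
    intro i j
    have he : (fun α => Mr α i j) =
        fun α => Real.exp ((β i ^ 2 / 2) * α ^ 2 + (Real.log (P i j) - β i ^ 2 / 2) * α) := by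
      funext α
      simp only [hMr, Matrix.of_apply]
      have h2 : Real.rpow (P i j) α = Real.exp (Real.log (P i j) * α) :=
        Real.rpow_def_of_pos (hP i j) α
      rw [h2, ← Real.exp_add]
      congr 1; ring
    rw [he]
    exact LC12.expQuad _ _ (by positivity)
  have hpow : ∀ n : ℕ, ∀ i j, LC12 (fun α => ((Mr α) ^ (n + 1)) i j) := by
    intro n
    induction n with
    | zero => intro i j; simpa [pow_one] using base i j
    | succ n ih =>
        intro i j
        have he : (fun α => ((Mr α) ^ (n + 2)) i j) =
            fun α => ∑ k, ((Mr α) ^ (n + 1)) i k * (Mr α) k j := by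
          funext α; rw [pow_succ, Matrix.mul_apply]
        rw [he]
        exact LC12.sum Finset.univ_nonempty fun k _ => (ih i k).mul (base k j)
  have hposE : ∀ (n : ℕ) (α : ℝ) i j, 0 < ((Mr α) ^ (n + 1)) i j :=
    fun n α i j => (hpow n i j).1 α
  set f : ℕ → ℝ → ℝ := fun n α =>
    (1 / ((n : ℝ) + 1)) * Real.log (∑ i, ∑ j, ((Mr α) ^ (n + 1)) i j) with hf
  have hconv : ∀ n, ConvexOn ℝ Set.univ (f n) := by
    intro n
    have hS : LC12 (fun α => ∑ i, ∑ j, ((Mr α) ^ (n + 1)) i j) :=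
      LC12.sum Finset.univ_nonempty fun i _ =>
        LC12.sum Finset.univ_nonempty fun j _ => hpow n i j
    have := hS.convexOn_log.smul (c := (1 / ((n : ℝ) + 1))) (by positivity)
    simpa [hf, smul_eq_mul] using this
  refine convexOn_of_tendsto12 hconv fun α => ?_
  set A : Matrix (Fin N) (Fin N) ℂ := (Mr α).map Complex.ofReal with hA
  have gelfand := spectrum.pow_nnnorm_pow_one_div_tendsto_nhds_spectralRadius A
  have hne : spectralRadius ℂ A ≠ ⊤ :=
    ne_top_of_le_ne_top ENNReal.coe_ne_top (spectrum.spectralRadius_le_nnnorm (𝕜 := ℂ) A)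
  set r : ℝ := (spectralRadius ℂ A).toReal with hr
  have htR : Tendsto (fun n : ℕ => ‖A ^ n‖ ^ (1 / (n : ℝ))) atTop (nhds r) := by
    have h := (ENNReal.tendsto_toReal hne).comp gelfand
    refine h.congr fun n => ?_
    show (((‖A ^ n‖₊ : ℝ≥0∞)) ^ (1 / (n : ℝ))).toReal = _
    rw [← ENNReal.toReal_rpow, ENNReal.coe_toReal, coe_nnnorm]
  have hbounds : ∀ n : ℕ,
      ((Mr α) ^ (n + 1)) i0 i0 ≤ ‖A ^ (n + 1)‖ ∧
      ‖A ^ (n + 1)‖ ≤ (∑ i, ∑ j, ((Mr α) ^ (n + 1)) i j) ∧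
      (∑ i, ∑ j, ((Mr α) ^ (n + 1)) i j) ≤ N * ‖A ^ (n + 1)‖ := by
    intro n
    have := norm_bounds12 hN ((Mr α) ^ (n + 1)) (hposE n α)
    rwa [hA, map_pow12]
  have hApos : ∀ n : ℕ, 0 < ‖A ^ (n + 1)‖ :=
    fun n => lt_of_lt_of_le (hposE n α i0 i0) (hbounds n).1
  set c : ℝ := Mr α i0 i0 with hc
  have hcpos : 0 < c := (base i0 i0).1 α
  have hlowB : ∀ n : ℕ, c ^ (n + 1) ≤ ((Mr α) ^ (n + 1)) i0 i0 := by
    intro n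
    induction n with
    | zero => simp [pow_one, hc]
    | succ n ih =>
        have he : ((Mr α) ^ (n + 2)) i0 i0 = ∑ k, ((Mr α) ^ (n + 1)) i0 k * (Mr α) k i0 := by
          rw [pow_succ, Matrix.mul_apply]
        rw [he]
        calc c ^ (n + 2) = c ^ (n + 1) * c := by ring
          _ ≤ ((Mr α) ^ (n + 1)) i0 i0 * Mr α i0 i0 :=
              mul_le_mul_of_nonneg_right ih hcpos.le
          _ ≤ ∑ k, ((Mr α) ^ (n + 1)) i0 k * (Mr α) k i0 :=
              Finset.single_le_sum
                (fun k _ => (mul_pos (hposE n α i0 k) ((base k i0).1 α)).le)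
                (Finset.mem_univ i0)
  have hlow_seq : ∀ᶠ n : ℕ in atTop, c ≤ ‖A ^ n‖ ^ (1 / (n : ℝ)) := by
    refine eventually_atTop.2 ⟨1, fun n hn => ?_⟩
    obtain ⟨m, rfl⟩ := Nat.exists_eq_succ_of_ne_zero (Nat.one_le_iff_ne_zero.mp hn)
    have hle : c ^ (m + 1) ≤ ‖A ^ (m + 1)‖ := le_trans (hlowB m) (hbounds m).1
    have hm1 : ((m + 1 : ℕ) : ℝ) ≠ 0 := by positivity
    have hceq : c = (c ^ (m + 1 : ℕ)) ^ (1 / ((m + 1 : ℕ) : ℝ)) := by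
      rw [← Real.rpow_natCast c (m + 1), ← Real.rpow_mul hcpos.le, mul_one_div,
        div_self hm1, Real.rpow_one]
    calc c = (c ^ (m + 1 : ℕ)) ^ (1 / ((m + 1 : ℕ) : ℝ)) := hceq
      _ ≤ ‖A ^ (m + 1)‖ ^ (1 / ((m + 1 : ℕ) : ℝ)) :=
          Real.rpow_le_rpow (by positivity) hle (by positivity)
  have hrpos : 0 < r := lt_of_lt_of_le hcpos (ge_of_tendsto htR hlow_seq)
  have hlog : Tendsto (fun n : ℕ => Real.log (‖A ^ n‖ ^ (1 / (n : ℝ)))) atTop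
      (nhds (Real.log r)) := (Real.continuousAt_log hrpos.ne').tendsto.comp htR
  set l : ℕ → ℝ := fun m => (1 / ((m : ℝ) + 1)) * Real.log ‖A ^ (m + 1)‖ with hl
  have hl_t : Tendsto l atTop (nhds (Real.log r)) := by
    have h := hlog.comp (tendsto_add_atTop_nat 1)
    refine h.congr fun m => ?_
    show Real.log (‖A ^ (m + 1)‖ ^ (1 / ((m + 1 : ℕ) : ℝ))) = _
    rw [Real.log_rpow (hApos m)]
    push_cast
    ring
  have hu_t : Tendsto (fun m : ℕ => l m + (1 / ((m : ℝ) + 1)) * Real.log N) atTop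
      (nhds (Real.log r)) := by
    have h2 : Tendsto (fun m : ℕ => (1 / ((m : ℝ) + 1)) * Real.log N) atTop (nhds 0) := by
      simpa using tendsto_one_div_add_atTop_nhds_zero_nat.mul_const (Real.log N)
    simpa using hl_t.add h2
  have hSpos : ∀ m : ℕ, 0 < ∑ i, ∑ j, ((Mr α) ^ (m + 1)) i j :=
    fun m => Finset.sum_pos (fun i _ => Finset.sum_pos (fun j _ => hposE m α i j)
      Finset.univ_nonempty) Finset.univ_nonempty
  refine tendsto_of_tendsto_of_tendsto_of_le_of_le hl_t hu_t (fun m => ?_) (fun m => ?_)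
  · exact mul_le_mul_of_nonneg_left (Real.log_le_log (hApos m) (hbounds m).2.1)
      (by positivity)
  · have hNne : (N : ℝ) ≠ 0 := by positivity
    calc f m α ≤ (1 / ((m : ℝ) + 1)) * Real.log ((N : ℝ) * ‖A ^ (m + 1)‖) :=
          mul_le_mul_of_nonneg_left (Real.log_le_log (hSpos m) (hbounds m).2.2)
            (by positivity)
      _ = l m + (1 / ((m : ℝ) + 1)) * Real.log N := by
          rw [Real.log_mul hNne (hApos m).ne']
          ring
end

section
/- Consider, for θ ∈ Δ with all row sums θ̄_i > 0 and H(θ) > 0, the problem of minimizing ∑_i θ̄_i(β_i - ξ_i/θ̄_i)²/2 over ξ ∈ ℝ^N subject to ∑_i ξ_i²/(2θ̄_i) ≤ H(θ). If H(θ) < R(θ) := ∑_i θ̄_i β_i²/2, then the optimal value equals (√(R(θ)) - √(H(θ)))², attained at ξ_i* = sign(β_i)·θ̄_i·|β_i|·√(H(θ)/R(θ)); if H(θ) ≥ R(θ) the optimal value is 0, attained at ξ_i* = θ̄_i β_i. -/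
lemma stmt18_sign_mul_abs (x : ℝ) : Real.sign x * |x| = x := by
  rcases lt_trichotomy x 0 with h | h | h
  · rw [Real.sign_of_neg h, abs_of_neg h]; ring
  · simp [h]
  · rw [Real.sign_of_pos h, abs_of_pos h]; ring

theorem stmt18 {N : ℕ} (θb β : Fin N → ℝ) (hθ : ∀ i, 0 < θb i) (hsum : ∑ i, θb i = 1)
    (hβ : β ≠ 0) (Hc : ℝ) (hH : 0 < Hc) :
    let R := ∑ i, θb i * β i ^ 2 / 2
    let f := fun ξ : Fin N → ℝ => ∑ i, θb i * (β i - ξ i / θb i) ^ 2 / 2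
    let C := {ξ : Fin N → ℝ | (∑ i, ξ i ^ 2 / (2 * θb i)) ≤ Hc}
    (Hc < R →
      (fun i => Real.sign (β i) * θb i * |β i| * Real.sqrt (Hc / R)) ∈ C ∧
      f (fun i => Real.sign (β i) * θb i * |β i| * Real.sqrt (Hc / R)) =
        (Real.sqrt R - Real.sqrt Hc) ^ 2 ∧
      ∀ ξ ∈ C, (Real.sqrt R - Real.sqrt Hc) ^ 2 ≤ f ξ) ∧
    (R ≤ Hc →
      (fun i => θb i * β i) ∈ C ∧ f (fun i => θb i * β i) = 0 ∧ ∀ ξ ∈ C, 0 ≤ f ξ) := by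
  intro R f C
  have hθne : ∀ i, θb i ≠ 0 := fun i => (hθ i).ne'
  obtain ⟨j, hj⟩ := Function.ne_iff.mp hβ
  have hj' : β j ≠ 0 := hj
  have hRpos : 0 < R := by
    have h1 : 0 < θb j * β j ^ 2 / 2 := by
      have := hθ j
      positivity
    exact lt_of_lt_of_le h1 (Finset.single_le_sum (f := fun i => θb i * β i ^ 2 / 2)
      (fun i _ => by have := hθ i; positivity) (Finset.mem_univ j))
  have h2R : ∑ i, θb i * β i ^ 2 = 2 * R := by
    show _ = 2 * ∑ i, θb i * β i ^ 2 / 2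
    rw [Finset.mul_sum]
    exact Finset.sum_congr rfl fun i _ => by ring
  -- decomposition of f
  have hfeq : ∀ ξ : Fin N → ℝ,
      f ξ = R - (∑ i, β i * ξ i) + ∑ i, ξ i ^ 2 / (2 * θb i) := by
    intro ξ
    have hterm : ∀ i : Fin N, θb i * (β i - ξ i / θb i) ^ 2 / 2
        = θb i * β i ^ 2 / 2 - β i * ξ i + ξ i ^ 2 / (2 * θb i) := by
      intro i
      have := hθne i
      field_simp
      ring
    show (∑ i, θb i * (β i - ξ i / θb i) ^ 2 / 2) = _
    simp only [hterm, Finset.sum_add_distrib, Finset.sum_sub_distrib]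
    rfl
  have hg0 : ∀ ξ : Fin N → ℝ, 0 ≤ ∑ i, ξ i ^ 2 / (2 * θb i) :=
    fun ξ => Finset.sum_nonneg fun i _ => by have := hθ i; positivity
  -- Cauchy-Schwarz: ∑ β ξ ≤ 2 √R √(g ξ)
  have hCS : ∀ ξ : Fin N → ℝ,
      (∑ i, β i * ξ i) ≤ 2 * Real.sqrt R * Real.sqrt (∑ i, ξ i ^ 2 / (2 * θb i)) := by
    intro ξ
    have h1 : ∀ i : Fin N, β i * ξ i
        = (Real.sqrt (θb i) * β i) * (ξ i / Real.sqrt (θb i)) := by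
      intro i
      have hs : Real.sqrt (θb i) ≠ 0 := Real.sqrt_ne_zero'.mpr (hθ i)
      field_simp
    have h2 : ∀ i : Fin N, (Real.sqrt (θb i) * β i) ^ 2 = θb i * β i ^ 2 := by
      intro i
      rw [mul_pow, Real.sq_sqrt (hθ i).le]
    have h3 : ∀ i : Fin N, (ξ i / Real.sqrt (θb i)) ^ 2 = ξ i ^ 2 / θb i := by
      intro i
      rw [div_pow, Real.sq_sqrt (hθ i).le]
    calc (∑ i, β i * ξ i)
        = ∑ i, (Real.sqrt (θb i) * β i) * (ξ i / Real.sqrt (θb i)) := by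
          exact Finset.sum_congr rfl fun i _ => h1 i
      _ ≤ Real.sqrt (∑ i, (Real.sqrt (θb i) * β i) ^ 2) *
          Real.sqrt (∑ i, (ξ i / Real.sqrt (θb i)) ^ 2) :=
          Real.sum_mul_le_sqrt_mul_sqrt _ _ _
      _ = Real.sqrt (2 * R) * Real.sqrt (2 * ∑ i, ξ i ^ 2 / (2 * θb i)) := by
          congr 1
          · rw [show (∑ i, (Real.sqrt (θb i) * β i) ^ 2) = ∑ i, θb i * β i ^ 2 from
              Finset.sum_congr rfl fun i _ => h2 i, h2R]
          · congr 1
            rw [Finset.mul_sum]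
            refine Finset.sum_congr rfl fun i _ => ?_
            rw [h3 i]
            have := hθne i
            field_simp
      _ = 2 * Real.sqrt R * Real.sqrt (∑ i, ξ i ^ 2 / (2 * θb i)) := by
          rw [Real.sqrt_mul (by norm_num), Real.sqrt_mul (by norm_num)]
          have h2' : Real.sqrt 2 * Real.sqrt 2 = 2 := Real.mul_self_sqrt (by norm_num)
          calc Real.sqrt 2 * Real.sqrt R *
              (Real.sqrt 2 * Real.sqrt (∑ i, ξ i ^ 2 / (2 * θb i)))
              = (Real.sqrt 2 * Real.sqrt 2) *
                (Real.sqrt R * Real.sqrt (∑ i, ξ i ^ 2 / (2 * θb i))) := by ring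
            _ = 2 * Real.sqrt R * Real.sqrt (∑ i, ξ i ^ 2 / (2 * θb i)) := by rw [h2']; ring
  -- general lower bound
  have hlow : ∀ ξ : Fin N → ℝ,
      (Real.sqrt R - Real.sqrt (∑ i, ξ i ^ 2 / (2 * θb i))) ^ 2 ≤ f ξ := by
    intro ξ
    rw [hfeq ξ]
    have hR' : Real.sqrt R ^ 2 = R := Real.sq_sqrt hRpos.le
    have hg' : Real.sqrt (∑ i, ξ i ^ 2 / (2 * θb i)) ^ 2 = ∑ i, ξ i ^ 2 / (2 * θb i) :=
      Real.sq_sqrt (hg0 ξ)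
    nlinarith [hCS ξ]
  have hsqHR : Real.sqrt (Hc / R) = Real.sqrt Hc / Real.sqrt R := Real.sqrt_div hH.le R
  constructor
  · intro hlt
    have hξeq : (fun i => Real.sign (β i) * θb i * |β i| * Real.sqrt (Hc / R))
        = fun i => θb i * β i * Real.sqrt (Hc / R) := by
      funext i
      rw [show Real.sign (β i) * θb i * |β i| = θb i * (Real.sign (β i) * |β i|) by ring,
        stmt18_sign_mul_abs]
    have hc2 : Real.sqrt (Hc / R) ^ 2 = Hc / R := Real.sq_sqrt (by positivity)
    have hmem : (∑ i, (θb i * β i * Real.sqrt (Hc / R)) ^ 2 / (2 * θb i)) = Hc := by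
      have : ∀ i : Fin N, (θb i * β i * Real.sqrt (Hc / R)) ^ 2 / (2 * θb i)
          = (θb i * β i ^ 2 / 2) * (Hc / R) := by
        intro i
        have := hθne i
        rw [mul_pow, mul_pow, hc2]
        field_simp
      rw [Finset.sum_congr rfl fun i _ => this i, ← Finset.sum_mul]
      show R * (Hc / R) = Hc
      field_simp
    refine ⟨?_, ?_, ?_⟩
    · show (∑ i, (Real.sign (β i) * θb i * |β i| * Real.sqrt (Hc / R)) ^ 2
          / (2 * θb i)) ≤ Hc
      calc (∑ i, (Real.sign (β i) * θb i * |β i| * Real.sqrt (Hc / R)) ^ 2 / (2 * θb i))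
          = ∑ i, (θb i * β i * Real.sqrt (Hc / R)) ^ 2 / (2 * θb i) := by
            refine Finset.sum_congr rfl fun i _ => ?_
            rw [show Real.sign (β i) * θb i * |β i|
              = θb i * (Real.sign (β i) * |β i|) by ring, stmt18_sign_mul_abs]
        _ ≤ Hc := hmem.le
    · rw [hξeq, hfeq]
      have hS : (∑ i, β i * (θb i * β i * Real.sqrt (Hc / R)))
          = 2 * R * Real.sqrt (Hc / R) := by
        calc (∑ i, β i * (θb i * β i * Real.sqrt (Hc / R)))
            = ∑ i, θb i * β i ^ 2 * Real.sqrt (Hc / R) :=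
              Finset.sum_congr rfl fun i _ => by ring
          _ = (∑ i, θb i * β i ^ 2) * Real.sqrt (Hc / R) := by rw [← Finset.sum_mul]
          _ = 2 * R * Real.sqrt (Hc / R) := by rw [h2R]
      rw [hS, hmem, hsqHR]
      have hR' : Real.sqrt R ^ 2 = R := Real.sq_sqrt hRpos.le
      have hH' : Real.sqrt Hc ^ 2 = Hc := Real.sq_sqrt hH.le
      have hRne : Real.sqrt R ≠ 0 := by positivity
      field_simp
      nlinarith [Real.sqrt_nonneg R, Real.sqrt_nonneg Hc]
    · intro ξ hξ
      have hgle : (∑ i, ξ i ^ 2 / (2 * θb i)) ≤ Hc := hξ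
      have h1 : Real.sqrt (∑ i, ξ i ^ 2 / (2 * θb i)) ≤ Real.sqrt Hc :=
        Real.sqrt_le_sqrt hgle
      have h2 : Real.sqrt Hc ≤ Real.sqrt R := Real.sqrt_le_sqrt hlt.le
      have h3 : (Real.sqrt R - Real.sqrt Hc) ^ 2
          ≤ (Real.sqrt R - Real.sqrt (∑ i, ξ i ^ 2 / (2 * θb i))) ^ 2 := by
        apply pow_le_pow_left₀ (by linarith) (by linarith)
      exact h3.trans (hlow ξ)
  · intro hle
    refine ⟨?_, ?_, ?_⟩
    · show (∑ i, (θb i * β i) ^ 2 / (2 * θb i)) ≤ Hc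
      have : ∀ i : Fin N, (θb i * β i) ^ 2 / (2 * θb i) = θb i * β i ^ 2 / 2 := by
        intro i
        have := hθne i
        field_simp
      rw [Finset.sum_congr rfl fun i _ => this i]
      exact hle
    · show (∑ i, θb i * (β i - θb i * β i / θb i) ^ 2 / 2) = 0
      refine Finset.sum_eq_zero fun i _ => ?_
      rw [mul_div_cancel_left₀ _ (hθne i)]
      ring
    · intro ξ _
      exact Finset.sum_nonneg fun i _ => by have := hθ i; positivity
end
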